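/- Let m be a positive integer, Λ a full-rank lattice in ℝ^m, ‖·‖ a norm on ℝ^m, and R > 1 a real number. Then there exists a point w ∈ ℝ^m such that #{v ∈ Λ : ‖v − w‖ ≤ R − 1} ≥ (1 − 1/R)^m · #{v ∈ Λ : ‖v − w‖ ≤ R}. -/

import Mathlib

open MeasureTheory Module Metric Set
open scoped ENNReal Pointwise

section auxiliary

variable {E : Type} [NormedAddCommGroup E] [NormedSpace ℝ E] [FiniteDimensional ℝ E]
  (L : Submodule ℤ E) [DiscreteTopology L] [IsZLattice ℝ L]

private theorem finite_latticeBall (w : E) (r : ℝ) :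
    {l : L | (l : E) ∈ closedBall w r}.Finite := by
  haveI : DiscreteTopology (↥L.toAddSubgroup) := inferInstanceAs (DiscreteTopology ↥L)
  have hcl : IsClosed (L : Set E) :=
    AddSubgroup.isClosed_of_discrete (H := L.toAddSubgroup)
  have hfin : (closedBall w r ∩ (L : Set E)).Finite :=
    Metric.finite_isBounded_inter_isClosed DiscreteTopology.isDiscrete isBounded_closedBall hcl
  have : {l : L | (l : E) ∈ closedBall w r} ⊆
      Subtype.val ⁻¹' (closedBall w r ∩ (L : Set E)) := by
    rintro ⟨l, hl⟩ h
    exact ⟨h, hl⟩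
  exact Set.Finite.subset (hfin.preimage (Subtype.val_injective.injOn)) this

private theorem ncard_eq_tsum (w : E) (r : ℝ) :
    (({v : E | v ∈ L ∧ ‖v - w‖ ≤ r}.ncard : ℝ≥0∞)) =
      ∑' l : L, (closedBall ((l : E)) r).indicator (1 : E → ℝ≥0∞) w := by
  classical
  have hS := finite_latticeBall L w r
  have himg : {v : E | v ∈ L ∧ ‖v - w‖ ≤ r} =
      Subtype.val '' {l : L | (l : E) ∈ closedBall w r} := by
    ext v
    constructor
    · rintro ⟨hv, hr⟩
      exact ⟨⟨v, hv⟩, by simpa [mem_closedBall, dist_eq_norm] using hr, rfl⟩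
    · rintro ⟨l, hl, rfl⟩
      exact ⟨l.2, by simpa [mem_closedBall, dist_eq_norm] using hl⟩
  have hterm : ∀ l : L, (closedBall ((l : E)) r).indicator (1 : E → ℝ≥0∞) w =
      ({l : L | (l : E) ∈ closedBall w r}).indicator (1 : L → ℝ≥0∞) l := by
    intro l
    simp only [Set.indicator_apply, mem_closedBall, Set.mem_setOf_eq, dist_comm,
      Pi.one_apply]
  rw [himg, Set.ncard_image_of_injective _ Subtype.val_injective]
  rw [tsum_congr hterm]
  rw [tsum_eq_sum (s := hS.toFinset) (by
    intro l hl
    rw [Set.indicator_apply_eq_zero]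
    intro hmem
    exact absurd (hS.mem_toFinset.mpr hmem) hl)]
  rw [Finset.sum_indicator_eq_sum_filter]
  have : Finset.filter (fun l : L => l ∈ {l : L | (l : E) ∈ closedBall w r}) hS.toFinset
      = hS.toFinset := by
    ext l
    simp [hS.mem_toFinset]
  rw [this]
  simp only [Pi.one_apply]
  rw [Finset.sum_const, nsmul_eq_mul, mul_one, Set.ncard_eq_toFinset_card _ hS]

end auxiliary

theorem exists_center_many_lattice_points (m : ℕ) (hm : 0 < m)
    (E : Type) [NormedAddCommGroup E] [NormedSpace ℝ E]
    (hdim : Module.finrank ℝ E = m)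
    (L : Submodule ℤ E) [DiscreteTopology L] [IsZLattice ℝ L]
    (R : ℝ) (hR : 1 < R) :
    ∃ w : E,
      (1 - 1 / R) ^ m * ({v : E | v ∈ L ∧ ‖v - w‖ ≤ R}.ncard : ℝ) ≤
        ({v : E | v ∈ L ∧ ‖v - w‖ ≤ R - 1}.ncard : ℝ) := by
  by_contra hcon
  push_neg at hcon
  have hfd : FiniteDimensional ℝ E :=
    FiniteDimensional.of_finrank_pos (by rw [hdim]; exact hm)
  borelize E
  haveI : ProperSpace E := FiniteDimensional.proper ℝ E
  obtain ⟨K⟩ : Nonempty (TopologicalSpace.PositiveCompacts E) := inferInstance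
  set μ : Measure E := Measure.addHaarMeasure K with hμdef
  have hc0 : (0:ℝ) < 1 - 1 / R := by
    have : 1 / R < 1 := by
      rw [div_lt_one (by linarith)]; linarith
    linarith
  set c : ℝ := (1 - 1 / R) ^ m with hc
  have hcpos : 0 < c := pow_pos hc0 m
  -- the counting function
  set N : ℝ → E → ℝ≥0∞ := fun r w =>
    ∑' l : L, (closedBall ((l : E)) r).indicator (1 : E → ℝ≥0∞) w with hN
  have hNmeas : ∀ r, Measurable (N r) := by
    intro r
    exact Measurable.ennreal_tsum fun l =>
      (measurable_one.indicator measurableSet_closedBall)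
  -- fundamental domain
  set b := Module.Free.chooseBasis ℤ L with hb
  set F : Set E := ZSpan.fundamentalDomain (b.ofZLatticeBasis ℝ) with hF
  have hfd' : IsAddFundamentalDomain L F μ := ZLattice.isAddFundamentalDomain b μ
  have hFmeas : MeasurableSet F := ZSpan.fundamentalDomain_measurableSet _
  have hFne : μ F ≠ 0 := ZSpan.measure_fundamentalDomain_ne_zero _
  -- unfolding: the integral of N r over F is the measure of the ball of radius r
  haveI : MeasurableVAdd L E := (inferInstance : MeasurableVAdd L.toAddSubgroup E)
  haveI : VAddInvariantMeasure L E μ :=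
    (inferInstance : VAddInvariantMeasure L.toAddSubgroup E μ)
  have key : ∀ r : ℝ, (∫⁻ w in F, N r w ∂μ) = μ (closedBall (0 : E) r) := by
    intro r
    rw [hN]
    rw [lintegral_tsum (fun l =>
      ((measurable_one.indicator measurableSet_closedBall)).aemeasurable)]
    have h1 : ∀ l : L, (∫⁻ w in F, (closedBall ((l : E)) r).indicator (1 : E → ℝ≥0∞) w ∂μ)
        = μ ((l +ᵥ closedBall (0 : E) r) ∩ F) := by
      intro l
      rw [lintegral_indicator_one measurableSet_closedBall,
        Measure.restrict_apply measurableSet_closedBall]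
      have hset : (l +ᵥ closedBall (0 : E) r) = closedBall ((l : E)) r := by
        ext x
        constructor
        · intro hx
          obtain ⟨y, hy, rfl⟩ := Set.mem_vadd_set.mp hx
          show dist ((l : E) + y) (l : E) ≤ r
          simpa [dist_eq_norm, add_sub_cancel_left] using hy
        · intro hx
          refine Set.mem_vadd_set.mpr ⟨x - (l : E), ?_, ?_⟩
          · simpa [dist_eq_norm] using hx
          · show (l : E) + (x - (l : E)) = x
            abel
      rw [hset]
    rw [tsum_congr h1]
    exact (hfd'.measure_eq_tsum (closedBall (0 : E) r)).symm
  -- pointwise strict inequality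
  have hpt : ∀ w : E, N (R - 1) w < ENNReal.ofReal c * N R w := by
    intro w
    have h1 := hcon w
    have h2 : (({v : E | v ∈ L ∧ ‖v - w‖ ≤ R - 1}.ncard : ℝ≥0∞))
        < ENNReal.ofReal c * (({v : E | v ∈ L ∧ ‖v - w‖ ≤ R}.ncard : ℝ≥0∞)) := by
      rw [← ENNReal.ofReal_natCast ({v : E | v ∈ L ∧ ‖v - w‖ ≤ R - 1}.ncard),
        ← ENNReal.ofReal_natCast ({v : E | v ∈ L ∧ ‖v - w‖ ≤ R}.ncard),
        ← ENNReal.ofReal_mul hcpos.le]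
      exact ENNReal.ofReal_lt_ofReal_iff_of_nonneg (Nat.cast_nonneg _) |>.mpr h1
    rw [ncard_eq_tsum L w (R - 1), ncard_eq_tsum L w R] at h2
    exact h2
  -- integrate the strict inequality
  have hfin1 : (∫⁻ w in F, N (R - 1) w ∂μ) ≠ ⊤ := by
    rw [key]
    exact (isCompact_closedBall 0 (R - 1)).measure_lt_top.ne
  have hstrict : (∫⁻ w in F, N (R - 1) w ∂μ)
      < ∫⁻ w in F, ENNReal.ofReal c * N R w ∂μ := by
    refine setLIntegral_strict_mono hFmeas hFne ?_ hfin1 ?_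
    · exact (hNmeas R).const_mul _
    · filter_upwards with w _ using hpt w
  rw [lintegral_const_mul _ (hNmeas R), key, key] at hstrict
  -- but the two sides are equal by Haar scaling
  have hscale : μ (closedBall (0 : E) (R - 1))
      = ENNReal.ofReal c * μ (closedBall (0 : E) R) := by
    have := Measure.addHaar_closedBall_mul_of_pos μ (0 : E) hc0 R
    rw [hdim] at this
    have hrr : (1 - 1 / R) * R = R - 1 := by
      field_simp
    rw [hrr] at this
    exact this
  rw [hscale] at hstrict
  exact lt_irrefl _ hstrict
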